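/- The stable b-matching of a finite weighted graph is unique: if M₁ and M₂ are both stable b-matchings of G (with respect to the same weights ω, capacities b, and strict linear order ≺ refining ω), then M₁ = M₂. -/

import Mathlib

/-!
Framework: finite simple graph `G` on vertex set `V`, positive edge weights `ω` on
unordered pairs of distinct vertices, capacities `b`, and a strict linear order
`prec` on unordered pairs of distinct vertices refining `ω`
(the paper's tie-breaking rule).  `M` is a set of edges.
-/

variable {V : Type*} [Fintype V] [DecidableEq V]

/-- Number of edges of `M` incident to vertex `u`. -/
def bDeg (M : Finset (Sym2 V)) (u : V) : ℕ :=
  (M.filter (fun e => u ∈ e)).card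

/-- `u` is saturated in `M`: it is incident to exactly `b u` edges of `M`. -/
def Saturated (b : V → ℕ) (M : Finset (Sym2 V)) (u : V) : Prop :=
  bDeg M u = b u

/-- `M` is a `b`-matching of `G`: a set of edges of `G` such that every vertex `u`
is incident to at most `b u` edges of `M`. -/
def IsBMatching (G : SimpleGraph V) (b : V → ℕ) (M : Finset (Sym2 V)) : Prop :=
  (∀ e ∈ M, e ∈ G.edgeSet) ∧ ∀ u : V, bDeg M u ≤ b u

/-- `M` is a stable `b`-matching of `G` (termination condition of the b-suitor
algorithm): for every non-matching edge `e` of `G` there is an endpoint `x` of `e`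
which is saturated and all of whose matched edges beat `e` in the order `prec`. -/
def IsStable (G : SimpleGraph V) (b : V → ℕ) (prec : Sym2 V → Sym2 V → Prop)
    (M : Finset (Sym2 V)) : Prop :=
  IsBMatching G b M ∧
    ∀ e ∈ G.edgeSet, e ∉ M →
      ∃ x ∈ e, Saturated b M x ∧ ∀ f ∈ M, x ∈ f → prec e f

/-- Any nonempty finset has a maximal element with respect to an irreflexive
transitive relation. -/
lemma exists_prec_max {α : Type*} [DecidableEq α] (prec : α → α → Prop)
    (hirr : ∀ e, ¬ prec e e) (htrans : ∀ e f g, prec e f → prec f g → prec e g)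
    (S : Finset α) (hS : S.Nonempty) :
    ∃ e ∈ S, ∀ f ∈ S, ¬ prec e f := by
  classical
  induction S using Finset.induction_on with
  | empty => exact absurd hS (by simp)
  | insert a S ha ih =>
    rcases S.eq_empty_or_nonempty with rfl | hSne
    · exact ⟨a, by simp, by simpa using hirr a⟩
    · obtain ⟨e, heS, hemax⟩ := ih hSne
      by_cases hea : prec e a
      · refine ⟨a, Finset.mem_insert_self _ _, ?_⟩
        intro f hf hpf
        rcases Finset.mem_insert.mp hf with rfl | hf
        · exact hirr _ hpf
        · exact hemax f hf (htrans _ _ _ hea hpf)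
      · refine ⟨e, Finset.mem_insert_of_mem heS, ?_⟩
        intro f hf hpf
        rcases Finset.mem_insert.mp hf with rfl | hf
        · exact hea hpf
        · exact hemax f hf hpf

/-- Key step: if `e` is a `prec`-maximal element of the symmetric difference of
two stable b-matchings and `e ∈ M₁ \ M₂`, we get a contradiction. -/
lemma stable_key {V : Type*} [Fintype V] [DecidableEq V]
    (G : SimpleGraph V) (b : V → ℕ) (prec : Sym2 V → Sym2 V → Prop)
    (M₁ M₂ : Finset (Sym2 V))
    (h₁ : IsStable G b prec M₁) (h₂ : IsStable G b prec M₂)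
    (e : Sym2 V) (he₁ : e ∈ M₁) (he₂ : e ∉ M₂)
    (hmax : ∀ f, (f ∈ M₁ ∧ f ∉ M₂) ∨ (f ∈ M₂ ∧ f ∉ M₁) → ¬ prec e f) :
    False := by
  have heG : e ∈ G.edgeSet := h₁.1.1 e he₁
  obtain ⟨x, hxe, hsat, hbeats⟩ := h₂.2 e heG he₂
  -- every edge of M₂ at x lies in M₁
  have hsub : M₂.filter (fun f => x ∈ f) ⊆ M₁.filter (fun f => x ∈ f) := by
    intro f hf
    rw [Finset.mem_filter] at hf ⊢
    refine ⟨?_, hf.2⟩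
    by_contra hf1
    exact hmax f (Or.inr ⟨hf.1, hf1⟩) (hbeats f hf.1 hf.2)
  have hss : M₂.filter (fun f => x ∈ f) ⊂ M₁.filter (fun f => x ∈ f) := by
    refine ⟨hsub, fun h => ?_⟩
    have : e ∈ M₂.filter (fun f => x ∈ f) := h (Finset.mem_filter.mpr ⟨he₁, hxe⟩)
    exact he₂ (Finset.mem_filter.mp this).1
  have hlt : bDeg M₂ x < bDeg M₁ x := Finset.card_lt_card hss
  have h1 : bDeg M₁ x ≤ b x := h₁.1.2 x
  rw [Saturated] at hsat
  omega

/-- The stable b-matching of a finite weighted graph is unique. -/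
theorem stable_bMatching_unique
    (G : SimpleGraph V) (ω : Sym2 V → ℝ) (b : V → ℕ)
    (prec : Sym2 V → Sym2 V → Prop)
    (hω : ∀ e : Sym2 V, ¬ e.IsDiag → 0 < ω e)
    (hirr : ∀ e : Sym2 V, ¬ prec e e)
    (htrans : ∀ e f g : Sym2 V, prec e f → prec f g → prec e g)
    (htotal : ∀ e f : Sym2 V, ¬ e.IsDiag → ¬ f.IsDiag → e ≠ f → prec e f ∨ prec f e)
    (href : ∀ e f : Sym2 V, ¬ e.IsDiag → ¬ f.IsDiag → ω e < ω f → prec e f)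
    (M₁ M₂ : Finset (Sym2 V))
    (h₁ : IsStable G b prec M₁) (h₂ : IsStable G b prec M₂) :
    M₁ = M₂ := by
  classical
  by_contra hne
  set D : Finset (Sym2 V) := (M₁ \ M₂) ∪ (M₂ \ M₁) with hD
  have hDne : D.Nonempty := by
    rw [Finset.nonempty_iff_ne_empty]
    intro h
    simp only [hD, Finset.union_eq_empty, Finset.sdiff_eq_empty_iff_subset] at h
    exact hne (Finset.Subset.antisymm h.1 h.2)
  obtain ⟨e, heD, hemax⟩ := exists_prec_max prec hirr htrans D hDne
  have hmax : ∀ f, (f ∈ M₁ ∧ f ∉ M₂) ∨ (f ∈ M₂ ∧ f ∉ M₁) → ¬ prec e f := by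
    intro f hf
    apply hemax
    rcases hf with ⟨hf1, hf2⟩ | ⟨hf1, hf2⟩ <;> simp [hD, hf1, hf2]
  rcases Finset.mem_union.mp heD with he | he <;> rw [Finset.mem_sdiff] at he
  · exact absurd (stable_key G b prec M₁ M₂ h₁ h₂ e he.1 he.2 hmax) not_false
  · refine absurd (stable_key G b prec M₂ M₁ h₂ h₁ e he.1 he.2 ?_) not_false
    intro f hf
    exact hmax f hf.symm
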